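/- arXiv:2401.17218 — 4 statements merged into one kernel-verified Lean document; each statement's English description precedes it below -/
import Mathlib

section
/- If dTC_m(X) < n, then X^m can be covered by n (not necessarily open) sets A_1, ..., A_n such that over each A_i the pullback σ_n^i of the map SP^{n!}(π_m) : SP^{n!}(P(X)) → SP^{n!}(X^m) along the restricted diagonal inclusion ∂_n : A_i → SP^{n!}(X^m) admits a continuous section. -/
open MeasureTheory unitInterval

noncomputable section

/-- The path space `P(X) = C([0,1], X)` with the compact-open topology. -/
abbrev PathSp (X : Type*) [TopologicalSpace X] : Type _ := C(unitInterval, X)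

/-- The space `B_n(Z)` of probability measures on a metric space `Z` supported on at most
`n` points, as a subspace of the space of probability measures with the Lévy–Prokhorov metric. -/
def Bmeas (n : ℕ) (Z : Type*) [MetricSpace Z] : Type _ :=
  letI : MeasurableSpace Z := borel Z
  {μ : LevyProkhorov (ProbabilityMeasure Z) //
    ∃ S : Finset Z, S.card ≤ n ∧ (LevyProkhorov.toMeasureEquiv μ : ProbabilityMeasure Z) (↑S : Set Z) = 1}

noncomputable instance (n : ℕ) (Z : Type*) [MetricSpace Z] : TopologicalSpace (Bmeas n Z) :=
  letI : MeasurableSpace Z := borel Z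
  haveI : BorelSpace Z := ⟨rfl⟩
  instTopologicalSpaceSubtype

/-- The underlying probability measure of an element of `B_n(Z)`. -/
def Bmeas.meas {n : ℕ} {Z : Type*} [MetricSpace Z] (μ : Bmeas n Z) :
    @ProbabilityMeasure Z (borel Z) :=
  LevyProkhorov.toMeasureEquiv μ.1

/-- `μ ∈ B_n(Z)` is supported on the set `A`. -/
def DistributedOn {Z : Type*} [MetricSpace Z] {n : ℕ} (μ : Bmeas n Z) (A : Set Z) : Prop :=
  ∃ S : Finset Z, (↑S : Set Z) ⊆ A ∧ Bmeas.meas μ (↑S : Set Z) = 1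

/-- The time points `t_j = j/(m-1)`, `j = 0, …, m-1`, in `[0,1]`. -/
def tpt (m : ℕ) (j : Fin m) : unitInterval :=
  Set.projIcc 0 1 zero_le_one ((j : ℝ) / ((m : ℝ) - 1))

/-- A `k`-distributed `m`-navigation algorithm on `X`. -/
def IsNavAlg (m k : ℕ) {X : Type*} [MetricSpace X]
    (s : (Fin m → X) → Bmeas k (PathSp X)) : Prop :=
  Continuous s ∧ ∀ x : Fin m → X,
    DistributedOn (s x) {φ : PathSp X | ∀ j : Fin m, φ (tpt m j) = x j}

/-- The `m`-th sequential distributional topological complexity. -/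
noncomputable def dTC (m : ℕ) (X : Type*) [MetricSpace X] : ℕ∞ :=
  sInf {c : ℕ∞ | ∃ k : ℕ, c = k ∧
    ∃ s : (Fin m → X) → Bmeas (k + 1) (PathSp X), IsNavAlg m (k + 1) s}

/-- A `k`-contraction of `Y` to the point `y₀`. -/
def IsContr (k : ℕ) {Y : Type*} [MetricSpace Y] (y₀ : Y)
    (H : Y → Bmeas k (PathSp Y)) : Prop :=
  Continuous H ∧ ∀ y : Y,
    DistributedOn (H y) {φ : PathSp Y | φ 0 = y ∧ φ 1 = y₀}

/-- The distributional Lusternik–Schnirelmann category. -/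
noncomputable def dcat (Y : Type*) [MetricSpace Y] : ℕ∞ :=
  sInf {c : ℕ∞ | ∃ k : ℕ, c = k ∧
    ∃ (y₀ : Y) (H : Y → Bmeas (k + 1) (PathSp Y)), IsContr (k + 1) y₀ H}

/-- The classical `m`-th sequential topological complexity. -/
noncomputable def TCcl (m : ℕ) (X : Type*) [TopologicalSpace X] : ℕ∞ :=
  sInf {c : ℕ∞ | ∃ k : ℕ, c = k ∧
    ∃ (U : Fin (k + 1) → Set (Fin m → X)) (s : ∀ i : Fin (k + 1), C(U i, PathSp X)),
      (∀ i, IsOpen (U i)) ∧ (∀ x, ∃ i, x ∈ U i) ∧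
      ∀ (i : Fin (k + 1)) (x : U i) (j : Fin m), (s i x) (tpt m j) = (x : Fin m → X) j}

/-- The homotopy lifting property with respect to all spaces (Hurewicz fibration). -/
def IsHurFib {E B : Type*} [TopologicalSpace E] [TopologicalSpace B] (p : E → B) : Prop :=
  ∀ (Z : Type) [TopologicalSpace Z] (f : C(Z, E)) (H : C(Z × unitInterval, B)),
    (∀ z, H (z, 0) = p (f z)) →
      ∃ G : C(Z × unitInterval, E),
        (∀ z t, p (G (z, t)) = H (z, t)) ∧ ∀ z, G (z, 0) = f z

/-- `E_k(p)`: the space of probability measures supported on at most `k` points of a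
single fiber of `p`, as a subspace of `B_k(E)`. -/
def FibMeas (k : ℕ) {E B : Type*} [MetricSpace E] (p : E → B) : Type _ :=
  {μ : Bmeas k E // ∃ b : B, DistributedOn μ (p ⁻¹' {b})}

instance (k : ℕ) {E B : Type*} [MetricSpace E] (p : E → B) :
    TopologicalSpace (FibMeas k p) := instTopologicalSpaceSubtype

/-- The map `B_k(p) : E_k(p) → B` sending a fiberwise supported measure to its base point. -/
noncomputable def fibProj (k : ℕ) {E B : Type*} [MetricSpace E] (p : E → B)
    (μ : FibMeas k p) : B :=
  Classical.choose μ.2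

/-- The distributional sectional category of a map `p : E → B`. -/
noncomputable def dsecat {E B : Type*} [MetricSpace E] [MetricSpace B] (p : E → B) : ℕ∞ :=
  sInf {c : ℕ∞ | ∃ k : ℕ, c = k ∧
    ∃ s : B → FibMeas (k + 1) p, Continuous s ∧ ∀ b, fibProj (k + 1) p (s b) = b}

/-- The fibration `π_m : P(X) → X^m`, `φ ↦ (φ(t_1), …, φ(t_m))`. -/
def piFib (m : ℕ) (X : Type*) [TopologicalSpace X] (φ : PathSp X) : Fin m → X :=
  fun j => φ (tpt m j)

/-- Tuples are identified if they differ by a permutation of coordinates. -/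
def spSetoid (N : ℕ) (Z : Type*) : Setoid (Fin N → Z) where
  r f g := ∃ p : Equiv.Perm (Fin N), ∀ i, f (p i) = g i
  iseqv :=
    ⟨fun f => ⟨Equiv.refl _, fun _ => rfl⟩,
      fun {f g} h => h.elim fun p hp =>
        ⟨p.symm, fun i => by rw [← hp (p.symm i), Equiv.apply_symm_apply]⟩,
      fun {f g h} h1 h2 => h1.elim fun p hp => h2.elim fun q hq =>
        ⟨q.trans p, fun i => by rw [Equiv.trans_apply, hp, hq]⟩⟩

/-- The `N`-th symmetric product `SP^N(Z) = Z^N / S_N`, with the quotient topology. -/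
def SP (N : ℕ) (Z : Type*) [TopologicalSpace Z] : Type _ := Quotient (spSetoid N Z)

instance (N : ℕ) (Z : Type*) [TopologicalSpace Z] : TopologicalSpace (SP N Z) :=
  instTopologicalSpaceQuotient

/-- The map `SP^N(F) : SP^N(Z) → SP^N(W)` induced by `F : Z → W` by functoriality. -/
def SPmap (N : ℕ) {Z W : Type*} [TopologicalSpace Z] [TopologicalSpace W] (F : Z → W) :
    SP N Z → SP N W :=
  Quot.map (fun f => F ∘ f)
    (fun f g h => h.elim fun p hp => ⟨p, fun i => congrArg F (hp i)⟩)

/-- The diagonal inclusion `Z → SP^N(Z)`, `z ↦ N·z`. -/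
def spDiag (N : ℕ) {Z : Type*} [TopologicalSpace Z] (z : Z) : SP N Z :=
  Quotient.mk (spSetoid N Z) (fun _ => z)

/-! ### Auxiliary material -/

section Aux

open ENNReal NNReal Metric

variable {Z : Type*} [MetricSpace Z]

/-- The underlying measure of an element of `B_k(Z)`. -/
noncomputable def bM {k : ℕ} (μ : Bmeas k Z) : @MeasureTheory.Measure Z (borel Z) :=
  letI : MeasurableSpace Z := borel Z
  (Bmeas.meas μ).toMeasure

lemma bM_univ {k : ℕ} (μ : Bmeas k Z) : bM μ Set.univ = 1 := by
  letI : MeasurableSpace Z := borel Z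
  haveI : IsProbabilityMeasure (bM μ) := (Bmeas.meas μ).2
  exact measure_univ

lemma bM_le_one {k : ℕ} (μ : Bmeas k Z) (A : Set Z) : bM μ A ≤ 1 := by
  letI : MeasurableSpace Z := borel Z
  haveI : IsProbabilityMeasure (bM μ) := (Bmeas.meas μ).2
  exact prob_le_one

lemma bM_exS {k : ℕ} (μ : Bmeas k Z) :
    ∃ S : Finset Z, S.card ≤ k ∧ bM μ (↑S : Set Z) = 1 := by
  letI : MeasurableSpace Z := borel Z
  obtain ⟨S, hcard, hS⟩ := μ.2
  refine ⟨S, hcard, ?_⟩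
  have := congrArg (fun x : ℝ≥0 => (x : ℝ≥0∞)) hS
  exact (ProbabilityMeasure.ennreal_coeFn_eq_coeFn_toMeasure (Bmeas.meas μ) (↑S : Set Z)).symm.trans this

/-- `x` is an atom of `μ`. -/
def isAtom {k : ℕ} (μ : Bmeas k Z) (x : Z) : Prop := bM μ {x} ≠ 0

lemma atoms_subset {k : ℕ} {μ : Bmeas k Z} {S : Finset Z}
    (hS : bM μ (↑S : Set Z) = 1) : {x | isAtom μ x} ⊆ ↑S := by
  letI : MeasurableSpace Z := borel Z
  haveI : BorelSpace Z := ⟨rfl⟩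
  intro x hx
  by_contra hxA
  apply hx
  have hc : bM μ (↑S : Set Z)ᶜ = 0 := by
    have := MeasureTheory.measure_compl (μ := bM μ) S.measurableSet
      (by rw [hS]; exact one_ne_top)
    rw [hS, bM_univ] at this
    simpa using this
  exact MeasureTheory.measure_mono_null (Set.singleton_subset_iff.mpr hxA) hc

lemma atoms_fin {k : ℕ} (μ : Bmeas k Z) : {x | isAtom μ x}.Finite := by
  obtain ⟨S, -, hS⟩ := bM_exS μ
  exact Set.Finite.subset S.finite_toSet (atoms_subset hS)

/-- The atoms of `μ` as a finset. -/
noncomputable def atomsB {k : ℕ} (μ : Bmeas k Z) : Finset Z := (atoms_fin μ).toFinset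

lemma mem_atomsB {k : ℕ} {μ : Bmeas k Z} {x : Z} : x ∈ atomsB μ ↔ isAtom μ x := by
  simp [atomsB, Set.Finite.mem_toFinset]

lemma atomsB_subset {k : ℕ} {μ : Bmeas k Z} {S : Finset Z}
    (hS : bM μ (↑S : Set Z) = 1) : atomsB μ ⊆ S := by
  intro x hx
  exact atoms_subset hS (mem_atomsB.mp hx)

lemma atomsB_card_le {k : ℕ} (μ : Bmeas k Z) : (atomsB μ).card ≤ k := by
  obtain ⟨S, hcard, hS⟩ := bM_exS μ
  exact le_trans (Finset.card_le_card (atomsB_subset hS)) hcard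

lemma bM_atomsB {k : ℕ} (μ : Bmeas k Z) : bM μ (↑(atomsB μ) : Set Z) = 1 := by
  letI : MeasurableSpace Z := borel Z
  haveI : BorelSpace Z := ⟨rfl⟩
  obtain ⟨S, -, hS⟩ := bM_exS μ
  have hsub : (↑S : Set Z) ⊆ ↑(atomsB μ) ∪ (↑S \ ↑(atomsB μ)) := by
    intro x hx
    by_cases hxa : x ∈ (↑(atomsB μ) : Set Z)
    · exact Or.inl hxa
    · exact Or.inr ⟨hx, hxa⟩
  have hnull : bM μ ((↑S : Set Z) \ ↑(atomsB μ)) = 0 := by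
    have hcnt : ((↑S : Set Z) \ ↑(atomsB μ)).Countable := (S.finite_toSet.diff).countable
    rw [← Set.biUnion_of_singleton ((↑S : Set Z) \ ↑(atomsB μ)),
      MeasureTheory.measure_biUnion_null_iff hcnt]
    intro x hx
    by_contra hne
    exact hx.2 (by exact_mod_cast mem_atomsB.mpr hne)
  have h1 : (1 : ℝ≥0∞) ≤ bM μ (↑(atomsB μ) : Set Z) := by
    calc (1 : ℝ≥0∞) = bM μ (↑S : Set Z) := hS.symm
      _ ≤ bM μ ((↑(atomsB μ) : Set Z) ∪ ((↑S : Set Z) \ ↑(atomsB μ))) :=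
          MeasureTheory.measure_mono hsub
      _ ≤ bM μ (↑(atomsB μ) : Set Z) + bM μ ((↑S : Set Z) \ ↑(atomsB μ)) :=
          MeasureTheory.measure_union_le _ _
      _ = bM μ (↑(atomsB μ) : Set Z) := by rw [hnull, add_zero]
  exact le_antisymm (bM_le_one μ _) h1

lemma atomsB_nonempty {k : ℕ} (μ : Bmeas k Z) : (atomsB μ).Nonempty := by
  rw [Finset.nonempty_iff_ne_empty]
  intro hemp
  have := bM_atomsB μ
  rw [hemp] at this
  simp at this

/-- If a measure assigns positive mass to a set, the set meets the atoms. -/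
lemma exists_atom_of_pos {k : ℕ} (μ : Bmeas k Z) {B : Set Z} (hB : bM μ B ≠ 0) :
    ∃ x ∈ atomsB μ, x ∈ B := by
  letI : MeasurableSpace Z := borel Z
  haveI : BorelSpace Z := ⟨rfl⟩
  by_contra hno
  push_neg at hno
  apply hB
  have hsub : B ⊆ (↑(atomsB μ) : Set Z)ᶜ := by
    intro x hx hxa
    exact (hno x hxa) hx
  have hc : bM μ (↑(atomsB μ) : Set Z)ᶜ = 0 := by
    have := MeasureTheory.measure_compl (μ := bM μ) (atomsB μ).measurableSet
      (by rw [bM_atomsB]; exact one_ne_top)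
    rw [bM_atomsB, bM_univ] at this
    simpa using this
  exact MeasureTheory.measure_mono_null hsub hc

/-- Two injective tuples with the same range define the same point of `SP`. -/
lemma mk_eq_mk_of_range_eq {i : ℕ} {f g : Fin i → Z} (hf : Function.Injective f)
    (hg : Function.Injective g) (h : Set.range f = Set.range g) :
    Quotient.mk (spSetoid i Z) f = Quotient.mk (spSetoid i Z) g := by
  have hgl : ∀ l, g l ∈ Set.range f := fun l => h ▸ Set.mem_range_self l
  choose p hp using hgl
  have hpinj : Function.Injective p := by
    intro a b hab
    apply hg
    rw [← hp a, ← hp b, hab]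
  have hpbij : Function.Bijective p := Finite.injective_iff_bijective.mp hpinj
  exact Quotient.sound ⟨Equiv.ofBijective p hpbij, fun l => hp l⟩

/-- The canonical enumeration of the atoms of an element of the `i`-th stratum. -/
noncomputable def enumA {k i : ℕ} (μ : {μ : Bmeas k Z // (atomsB μ).card = i}) :
    Fin i → Z :=
  fun l => ((atomsB μ.1).equivFin.symm (Fin.cast μ.2.symm l) : Z)

lemma enumA_inj {k i : ℕ} (μ : {μ : Bmeas k Z // (atomsB μ).card = i}) :
    Function.Injective (enumA μ) := by
  intro a b hab
  have := Subtype.coe_injective hab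
  have := (atomsB μ.1).equivFin.symm.injective this
  exact Fin.cast_injective _ this

lemma enumA_range {k i : ℕ} (μ : {μ : Bmeas k Z // (atomsB μ).card = i}) :
    Set.range (enumA μ) = ↑(atomsB μ.1) := by
  apply Set.eq_of_subset_of_subset
  · rintro x ⟨l, rfl⟩
    exact ((atomsB μ.1).equivFin.symm _).2
  · intro x hx
    refine ⟨Fin.cast μ.2 ((atomsB μ.1).equivFin ⟨x, hx⟩), ?_⟩
    simp [enumA]

/-- The map assigning to a measure with exactly `i` atoms the unordered tuple of its atoms. -/
noncomputable def atomsSP {k i : ℕ} (μ : {μ : Bmeas k Z // (atomsB μ).card = i}) :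
    SP i Z :=
  Quotient.mk (spSetoid i Z) (enumA μ)

lemma atomsSP_eq {k i : ℕ} (μ : {μ : Bmeas k Z // (atomsB μ).card = i})
    {f : Fin i → Z} (hf : Function.Injective f) (hr : Set.range f = ↑(atomsB μ.1)) :
    Quotient.mk (spSetoid i Z) f = atomsSP μ :=
  mk_eq_mk_of_range_eq hf (enumA_inj μ) (hr.trans (enumA_range μ).symm)

lemma bM_of_nnreal {k : ℕ} {μ : Bmeas k Z} {A : Set Z}
    (h : Bmeas.meas μ A = 1) : bM μ A = 1 := by
  letI : MeasurableSpace Z := borel Z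
  have := congrArg (fun x : ℝ≥0 => (x : ℝ≥0∞)) h
  exact (ProbabilityMeasure.ennreal_coeFn_eq_coeFn_toMeasure (Bmeas.meas μ) A).symm.trans this

lemma atomsB_subset_of_distributedOn {k : ℕ} {μ : Bmeas k Z} {A : Set Z}
    (h : DistributedOn μ A) : ∀ x ∈ atomsB μ, x ∈ A := by
  obtain ⟨S, hSA, hS1⟩ := h
  exact fun x hx => hSA (atomsB_subset (bM_of_nnreal hS1) hx)

/-- The key Lévy–Prokhorov estimate: close measures give mass to small balls around atoms. -/
lemma bM_le_ball_add {k : ℕ} (μ ν : Bmeas k Z) {δ : ℝ} (hδ : 0 < δ)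
    (hd : @MeasureTheory.levyProkhorovDist Z (borel Z) _ (bM μ) (bM ν) < δ) (x : Z) :
    bM μ {x} ≤ bM ν (ball x δ) + ENNReal.ofReal δ := by
  letI : MeasurableSpace Z := borel Z
  haveI : BorelSpace Z := ⟨rfl⟩
  haveI : IsProbabilityMeasure (bM μ) := (Bmeas.meas μ).2
  haveI : IsProbabilityMeasure (bM ν) := (Bmeas.meas ν).2
  have hne : MeasureTheory.levyProkhorovEDist (bM μ) (bM ν) ≠ ⊤ :=
    MeasureTheory.levyProkhorovEDist_ne_top _ _
  have hedist : MeasureTheory.levyProkhorovEDist (bM μ) (bM ν) < ENNReal.ofReal δ := by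
    rw [← ENNReal.ofReal_toReal hne]
    exact (ENNReal.ofReal_lt_ofReal_iff hδ).mpr hd
  have := MeasureTheory.left_measure_le_of_levyProkhorovEDist_lt hedist
    (measurableSet_singleton x)
  rwa [ENNReal.toReal_ofReal hδ.le, Metric.thickening_singleton] at this

lemma continuous_atomsSP {k i : ℕ} :
    Continuous (atomsSP : {μ : Bmeas k Z // (atomsB μ).card = i} → SP i Z) := by
  classical
  letI : MeasurableSpace Z := borel Z
  haveI : BorelSpace Z := ⟨rfl⟩
  rw [continuous_iff_continuousAt]
  intro μ₀
  rw [continuousAt_def]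
  intro U hU
  set xx := enumA μ₀ with hxx
  have hQU : (Quotient.mk (spSetoid i Z)) ⁻¹' U ∈ nhds xx :=
    (continuous_quot_mk.continuousAt (x := xx)).preimage_mem_nhds hU
  obtain ⟨ε, εpos, hball⟩ := Metric.mem_nhds_iff.mp hQU
  have hi : 0 < i := μ₀.2 ▸ Finset.card_pos.mpr (atomsB_nonempty μ₀.1)
  haveI : Nonempty (Fin i) := ⟨⟨0, hi⟩⟩
  have hmem : ∀ l : Fin i, xx l ∈ atomsB μ₀.1 := by
    intro l
    have : xx l ∈ Set.range (enumA μ₀) := Set.mem_range_self l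
    rwa [enumA_range μ₀] at this
  have hw : ∀ l : Fin i, bM μ₀.1 {xx l} ≠ 0 := fun l => mem_atomsB.mp (hmem l)
  have hwt : ∀ l : Fin i, bM μ₀.1 {xx l} ≠ ⊤ :=
    fun l => (lt_of_le_of_lt (bM_le_one _ _) one_lt_top).ne
  -- a lower bound for the weights
  obtain ⟨δ₂, hδ₂pos, hδ₂⟩ : ∃ δ₂ > 0, ∀ l, ENNReal.ofReal δ₂ < bM μ₀.1 {xx l} := by
    set c := Finset.univ.inf' Finset.univ_nonempty fun l => (bM μ₀.1 {xx l}).toReal with hc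
    have hcpos : 0 < c := by
      rw [hc, Finset.lt_inf'_iff]
      exact fun l _ => ENNReal.toReal_pos (hw l) (hwt l)
    refine ⟨c / 2, by positivity, fun l => ?_⟩
    rw [ENNReal.ofReal_lt_iff_lt_toReal (by positivity) (hwt l)]
    have : c ≤ (bM μ₀.1 {xx l}).toReal := Finset.inf'_le _ (Finset.mem_univ l)
    linarith
  -- a lower bound for the separation of the atoms
  obtain ⟨δ₃, hδ₃pos, hδ₃⟩ : ∃ δ₃ > 0, ∀ a b : Fin i, a ≠ b →
      2 * δ₃ < dist (xx a) (xx b) := by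
    by_cases hpair : (Finset.univ.offDiag : Finset (Fin i × Fin i)).Nonempty
    · set c := (Finset.univ.offDiag : Finset (Fin i × Fin i)).inf' hpair
        (fun p => dist (xx p.1) (xx p.2)) with hc
      have hcpos : 0 < c := by
        rw [hc, Finset.lt_inf'_iff]
        rintro ⟨a, b⟩ hab
        rw [Finset.mem_offDiag] at hab
        exact dist_pos.mpr fun he => hab.2.2 (enumA_inj μ₀ he)
      refine ⟨c / 4, by positivity, fun a b hab => ?_⟩
      have : c ≤ dist (xx a) (xx b) := by
        rw [hc]
        have hmem2 : ((a, b) : Fin i × Fin i) ∈ (Finset.univ.offDiag : Finset (Fin i × Fin i)) :=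
          Finset.mem_offDiag.mpr ⟨Finset.mem_univ _, Finset.mem_univ _, hab⟩
        exact Finset.inf'_le (fun p => dist (xx p.1) (xx p.2)) hmem2
      linarith
    · refine ⟨1, one_pos, fun a b hab => ?_⟩
      exact absurd ⟨(a, b), by simp [Finset.mem_offDiag, hab]⟩ hpair
  set δ := min ε (min δ₂ δ₃) with hδdef
  have hδpos : 0 < δ := lt_min εpos (lt_min hδ₂pos hδ₃pos)
  have hδε : δ ≤ ε := min_le_left _ _
  have hδ2 : δ ≤ δ₂ := le_trans (min_le_right _ _) (min_le_left _ _)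
  have hδ3 : δ ≤ δ₃ := le_trans (min_le_right _ _) (min_le_right _ _)
  have hopen : IsOpen {ν : {μ : Bmeas k Z // (atomsB μ).card = i} |
      dist ν.1.1 μ₀.1.1 < δ} := by
    have hc : Continuous (fun ν : {μ : Bmeas k Z // (atomsB μ).card = i} => ν.1.1) :=
      continuous_subtype_val.comp continuous_subtype_val
    exact isOpen_lt (continuous_dist.comp (hc.prodMk continuous_const)) continuous_const
  apply Filter.mem_of_superset (hopen.mem_nhds (by simpa using hδpos))
  intro ν hν
  have hνd : MeasureTheory.levyProkhorovDist (bM μ₀.1) (bM ν.1) < δ := by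
    have h' : dist ν.1.1 μ₀.1.1 < δ := hν
    have he : dist ν.1.1 μ₀.1.1
        = MeasureTheory.levyProkhorovDist (bM ν.1) (bM μ₀.1) := rfl
    rw [MeasureTheory.levyProkhorovDist_comm]
    rw [he] at h'
    exact h'
  have key : ∀ l : Fin i, ∃ z, z ∈ atomsB ν.1 ∧ dist z (xx l) < δ := by
    intro l
    have hb := bM_le_ball_add μ₀.1 ν.1 hδpos hνd (xx l)
    have hpos : bM ν.1 (ball (xx l) δ) ≠ 0 := by
      intro h0
      rw [h0, zero_add] at hb
      have : ENNReal.ofReal δ < bM μ₀.1 {xx l} :=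
        lt_of_le_of_lt (ENNReal.ofReal_le_ofReal hδ2) (hδ₂ l)
      exact absurd (lt_of_lt_of_le this hb) (lt_irrefl _)
    obtain ⟨z, hz, hzb⟩ := exists_atom_of_pos ν.1 hpos
    exact ⟨z, hz, mem_ball.mp hzb⟩
  choose y hy₁ hy₂ using key
  have hyinj : Function.Injective y := by
    intro a b hab
    by_contra hne
    have h1 : dist (xx a) (xx b) ≤ dist (xx a) (y a) + dist (y b) (xx b) := by
      calc dist (xx a) (xx b) ≤ dist (xx a) (y a) + dist (y a) (xx b) := dist_triangle _ _ _
        _ = dist (xx a) (y a) + dist (y b) (xx b) := by rw [hab]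
    have h2 : dist (xx a) (y a) < δ := by rw [dist_comm]; exact hy₂ a
    have h3 := hδ₃ a b hne
    have h4 := hy₂ b
    linarith
  have hrange : Set.range y = ↑(atomsB ν.1) := by
    have himg : Finset.image y Finset.univ = atomsB ν.1 := by
      apply Finset.eq_of_subset_of_card_le
      · intro z hz
        obtain ⟨l, -, rfl⟩ := Finset.mem_image.mp hz
        exact hy₁ l
      · rw [Finset.card_image_of_injective _ hyinj, Finset.card_univ, Fintype.card_fin, ν.2]
    rw [← himg, Finset.coe_image, Finset.coe_univ, Set.image_univ]
  show atomsSP ν ∈ U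
  rw [← atomsSP_eq ν hyinj hrange]
  apply hball
  rw [mem_ball, dist_pi_lt_iff εpos]
  exact fun l => lt_of_lt_of_le (hy₂ l) hδε

/-- The projection `Fin N → Fin i` used for the diagonal replication map. -/
def spProjN (i N : ℕ) (h : i * (N / i) = N) : Fin N → Fin i :=
  fun l => ((finProdFinEquiv.trans (finCongr h)).symm l).1

/-- The diagonal replication map `SP^i(W) → SP^N(W)` when `i ∣ N`. -/
def spRepN (i N : ℕ) (h : i * (N / i) = N) {W : Type*} [TopologicalSpace W] :
    SP i W → SP N W :=
  Quot.map (fun f => f ∘ spProjN i N h)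
    (by
      rintro f g ⟨p, hp⟩
      refine ⟨(finProdFinEquiv.trans (finCongr h)).symm.trans
        ((p.prodCongr (Equiv.refl (Fin (N / i)))).trans
          (finProdFinEquiv.trans (finCongr h))), fun l => ?_⟩
      have hproj : spProjN i N h ((finProdFinEquiv.trans (finCongr h)).symm.trans
          ((p.prodCongr (Equiv.refl (Fin (N / i)))).trans
            (finProdFinEquiv.trans (finCongr h))) l) = p (spProjN i N h l) := by
        simp [spProjN]
      show f (spProjN i N h _) = g (spProjN i N h l)
      rw [hproj]
      exact hp (spProjN i N h l))

lemma continuous_spRepN (i N : ℕ) (h : i * (N / i) = N) {W : Type*} [TopologicalSpace W] :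
    Continuous (spRepN i N h (W := W)) := by
  have hq : Topology.IsQuotientMap (Quot.mk (spSetoid i W).r : (Fin i → W) → SP i W) :=
    isQuotientMap_quot_mk
  refine hq.continuous_iff.mpr (?_ : Continuous ((spRepN i N h (W := W)) ∘ (Quot.mk (spSetoid i W).r : (Fin i → W) → SP i W)))
  have : (spRepN i N h (W := W)) ∘ (Quot.mk (spSetoid i W).r)
      = fun f => Quot.mk (spSetoid N W).r (f ∘ spProjN i N h) := rfl
  rw [this]
  exact continuous_quot_mk.comp (continuous_pi fun l => continuous_apply _)

end Aux

/-- If `dTC_m(X) < n`, then `X^m` is covered by `n` sets `A i` over each of which the pullback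
of `SP^{n!}(π_m)` along the restricted diagonal inclusion admits a continuous section. -/
theorem cover_with_sections_of_dTC_lt (m : ℕ) (hm : 2 ≤ m) (X : Type) [MetricSpace X]
    [PathConnectedSpace X] (n : ℕ) (hn : 1 ≤ n) (h : dTC m X < (n : ℕ∞)) :
    ∃ A : Fin n → Set (Fin m → X),
      (∀ x, ∃ i, x ∈ A i) ∧
      ∀ i : Fin n,
        ∃ sec : A i → {q : A i × SP (Nat.factorial n) (PathSp X) //
            SPmap (Nat.factorial n) (piFib m X) q.2 = spDiag (Nat.factorial n) (q.1 : Fin m → X)},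
          Continuous sec ∧ ∀ x, (sec x).1.1 = x := by
  classical
  obtain ⟨c, hc, hlt⟩ := sInf_lt_iff.mp h
  obtain ⟨k, rfl, s, hs⟩ := hc
  have hkn : k + 1 ≤ n := Nat.succ_le_of_lt (by exact_mod_cast hlt)
  refine ⟨fun i => {x | (atomsB (s x)).card = (i : ℕ) + 1}, ?_, ?_⟩
  · intro x
    have h1 : 1 ≤ (atomsB (s x)).card := Finset.card_pos.mpr (atomsB_nonempty _)
    have h2 : (atomsB (s x)).card ≤ k + 1 := atomsB_card_le _
    refine ⟨⟨(atomsB (s x)).card - 1, by omega⟩, ?_⟩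
    show (atomsB (s x)).card = (atomsB (s x)).card - 1 + 1
    omega
  · intro i
    have hin : (i : ℕ) < n := i.isLt
    have hdvd : ((i : ℕ) + 1) * (Nat.factorial n / ((i : ℕ) + 1)) = Nat.factorial n :=
      Nat.mul_div_cancel' (Nat.dvd_factorial (by omega) (by omega))
    have hfib : ∀ x : {x : Fin m → X // (atomsB (s x)).card = (i : ℕ) + 1},
        SPmap (Nat.factorial n) (piFib m X)
          (spRepN ((i : ℕ) + 1) (Nat.factorial n) hdvd (atomsSP ⟨s x.1, x.2⟩))
        = spDiag (Nat.factorial n) x.1 := by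
      intro x
      have hsub := atomsB_subset_of_distributedOn (hs.2 x.1)
      have heq : (piFib m X ∘ (enumA (⟨s x.1, x.2⟩ :
          {μ : Bmeas (k + 1) (PathSp X) // (atomsB μ).card = (i : ℕ) + 1})
            ∘ spProjN ((i : ℕ) + 1) (Nat.factorial n) hdvd))
          = (fun _ : Fin (Nat.factorial n) => x.1) := by
        funext l
        have hmem : enumA (⟨s x.1, x.2⟩ :
            {μ : Bmeas (k + 1) (PathSp X) // (atomsB μ).card = (i : ℕ) + 1})
              (spProjN ((i : ℕ) + 1) (Nat.factorial n) hdvd l) ∈ atomsB (s x.1) := by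
          have := Set.mem_range_self (f := enumA (⟨s x.1, x.2⟩ :
            {μ : Bmeas (k + 1) (PathSp X) // (atomsB μ).card = (i : ℕ) + 1}))
              (spProjN ((i : ℕ) + 1) (Nat.factorial n) hdvd l)
          rwa [enumA_range] at this
        funext j
        exact hsub _ hmem j
      exact congrArg (Quotient.mk (spSetoid (Nat.factorial n) (Fin m → X))) heq
    refine ⟨fun x => ⟨(x, spRepN ((i : ℕ) + 1) (Nat.factorial n) hdvd
      (atomsSP ⟨s x.1, x.2⟩)), hfib x⟩, ?_, fun x => rfl⟩
    apply Continuous.subtype_mk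
    apply Continuous.prodMk continuous_id
    exact (continuous_spRepN _ _ _).comp (continuous_atomsSP.comp
      (Continuous.subtype_mk (hs.1.comp continuous_subtype_val) _))
end
end

section
/- For any Hurewicz fibration p : E → B between metric spaces and any n ≥ 1, the map B_n(p) : E_n(p) → B, where E_n(p) = ⋃_{x∈B} B_n(p^{-1}(x)) ⊆ B_n(E) and B_n(p)(μ) = x whenever supp(μ) ⊆ p^{-1}(x), is a Hurewicz fibration. -/
open MeasureTheory unitInterval

noncomputable section

open Topology Metric Set

section AuxLemmas

lemma probCoe_eq_one_iff {Ω : Type*} [MeasurableSpace Ω] (P : ProbabilityMeasure Ω) (A : Set Ω) :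
    P A = 1 ↔ P.toMeasure A = 1 := by
  rw [← ProbabilityMeasure.ennreal_coeFn_eq_coeFn_toMeasure]
  norm_cast

lemma push_dist_le {E : Type*} [MetricSpace E] [MeasurableSpace E] [BorelSpace E]
    {μ ν : Measure E} [IsProbabilityMeasure μ] [IsProbabilityMeasure ν]
    {g g₀ : E → E} (hg : Measurable g) (hg₀ : Measurable g₀)
    {S : Finset E} (hμS : μ ↑S = 1) {F : Set E} (hFm : MeasurableSet F) (hνF : ν F = 1)
    {δ ε : ℝ} (hδ : 0 < δ) (hε : 0 < ε)
    (hclose : ∀ e ∈ S, ∀ e' ∈ F, dist e e' < δ → dist (g e') (g₀ e) < ε)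
    (hLP : levyProkhorovEDist μ ν < ENNReal.ofReal (min δ ε)) :
    levyProkhorovDist (ν.map g) (μ.map g₀) ≤ ε := by
  have hmin : 0 < min δ ε := lt_min hδ hε
  haveI : IsProbabilityMeasure (ν.map g) := Measure.isProbabilityMeasure_map hg.aemeasurable
  haveI : IsProbabilityMeasure (μ.map g₀) := Measure.isProbabilityMeasure_map hg₀.aemeasurable
  have hSm : MeasurableSet (↑S : Set E) := S.finite_toSet.measurableSet
  apply levyProkhorovDist_le_of_forall_le _ _ hε.le
  intro ε' A hε' hA
  rw [Measure.map_apply hg hA, Measure.map_apply hg₀ isOpen_thickening.measurableSet]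
  have hνcF : ν Fᶜ = 0 := by
    rw [measure_compl hFm (measure_ne_top _ _), hνF, measure_univ, tsub_self]
  have hμcS : μ (↑S : Set E)ᶜ = 0 := by
    rw [measure_compl hSm (measure_ne_top _ _), hμS, measure_univ, tsub_self]
  have step1 : ν (g ⁻¹' A) ≤ ν (g ⁻¹' A ∩ F) := by
    calc ν (g ⁻¹' A) = ν (g ⁻¹' A ∩ F) + ν (g ⁻¹' A \ F) :=
          (measure_inter_add_diff _ hFm).symm
    _ ≤ ν (g ⁻¹' A ∩ F) + ν Fᶜ := by
          gcongr; exact diff_subset_compl _ _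
    _ = ν (g ⁻¹' A ∩ F) := by rw [hνcF, add_zero]
  have step2 : ν (g ⁻¹' A ∩ F) ≤
      μ (thickening (min δ ε) (g ⁻¹' A ∩ F)) + ENNReal.ofReal (min δ ε) := by
    have := right_measure_le_of_levyProkhorovEDist_lt hLP (B_mble := (hg hA).inter hFm)
    rwa [ENNReal.toReal_ofReal hmin.le] at this
  have step3 : μ (thickening (min δ ε) (g ⁻¹' A ∩ F)) ≤
      μ (thickening (min δ ε) (g ⁻¹' A ∩ F) ∩ ↑S) := by
    calc μ (thickening (min δ ε) (g ⁻¹' A ∩ F))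
        = μ (thickening (min δ ε) (g ⁻¹' A ∩ F) ∩ ↑S)
          + μ (thickening (min δ ε) (g ⁻¹' A ∩ F) \ ↑S) :=
          (measure_inter_add_diff _ hSm).symm
    _ ≤ μ (thickening (min δ ε) (g ⁻¹' A ∩ F) ∩ ↑S) + μ (↑S : Set E)ᶜ := by
          gcongr; exact diff_subset_compl _ _
    _ = _ := by rw [hμcS, add_zero]
  have key : thickening (min δ ε) (g ⁻¹' A ∩ F) ∩ ↑S ⊆ g₀ ⁻¹' (thickening ε' A) := by
    rintro e ⟨hthick, heS⟩
    obtain ⟨e', he'mem, hdist⟩ := Metric.mem_thickening_iff.1 hthick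
    have h2 := hclose e heS e' he'mem.2 (hdist.trans_le (min_le_left _ _))
    exact Metric.mem_thickening_iff.2 ⟨g e', he'mem.1, (dist_comm (g₀ e) (g e') ▸ h2).trans hε'⟩
  calc ν (g ⁻¹' A) ≤ μ (thickening (min δ ε) (g ⁻¹' A ∩ F)) + ENNReal.ofReal (min δ ε) :=
        step1.trans step2
  _ ≤ μ (g₀ ⁻¹' (thickening ε' A)) + ENNReal.ofReal ε' := by
        exact add_le_add (step3.trans (measure_mono key))
          (ENNReal.ofReal_le_ofReal ((min_le_right δ ε).trans hε'.le))


section BmeasAux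
variable {E B : Type*} [MetricSpace E]

lemma meas_finset_inter_one {Ω : Type*} [DecidableEq Ω] [MeasurableSpace Ω] [MeasurableSingletonClass Ω]
    (m : MeasureTheory.Measure Ω) [MeasureTheory.IsProbabilityMeasure m] {S T : Finset Ω}
    (hS : m ↑S = 1) (hT : m ↑T = 1) : m ↑(S ∩ T) = 1 := by
  have hTm : MeasurableSet (↑T : Set Ω) := T.finite_toSet.measurableSet
  have hTc : m (↑T : Set Ω)ᶜ = 0 := by
    rw [MeasureTheory.measure_compl hTm (MeasureTheory.measure_ne_top _ _), hT,
      MeasureTheory.measure_univ, tsub_self]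
  have hdiff : m (↑S \ ↑T : Set Ω) = 0 :=
    MeasureTheory.measure_mono_null (diff_subset_compl _ _) hTc
  have := MeasureTheory.measure_inter_add_diff (μ := m) (↑S : Set Ω) hTm
  rw [hdiff, add_zero, hS] at this
  apply le_antisymm (MeasureTheory.prob_le_one)
  rw [← this]
  exact MeasureTheory.measure_mono (by rw [Finset.coe_inter])

/-- From the two support conditions, extract one finset supported in the fiber. -/
lemma exists_good_support {n : ℕ} {p : E → B} (μ : FibMeas n p) {b : B}
    (hb : DistributedOn μ.1 (p ⁻¹' {b})) :
    letI : MeasurableSpace E := borel E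
    ∃ S : Finset E, S.card ≤ n ∧ (↑S : Set E) ⊆ p ⁻¹' {b} ∧
      (Bmeas.meas μ.1).toMeasure ↑S = 1 := by
  classical
  letI : MeasurableSpace E := borel E
  haveI : BorelSpace E := ⟨rfl⟩
  obtain ⟨S₁, hcard, hS₁⟩ := μ.1.2
  obtain ⟨S₂, hsub, hS₂⟩ := hb
  have h1 : (Bmeas.meas μ.1).toMeasure ↑S₁ = 1 := (probCoe_eq_one_iff _ _).1 hS₁
  have h2 : (Bmeas.meas μ.1).toMeasure ↑S₂ = 1 := (probCoe_eq_one_iff _ _).1 hS₂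
  refine ⟨S₁ ∩ S₂, le_trans (Finset.card_le_card (Finset.inter_subset_left)) hcard, ?_, ?_⟩
  · intro x hx
    have : x ∈ S₂ := (Finset.mem_inter.1 (Finset.mem_coe.1 hx)).2
    exact hsub (Finset.mem_coe.2 this)
  · exact meas_finset_inter_one _ h1 h2

lemma distributedOn_base_unique {n : ℕ} {p : E → B} (μ : Bmeas n E) {b b' : B}
    (h : DistributedOn μ (p ⁻¹' {b})) (h' : DistributedOn μ (p ⁻¹' {b'})) : b = b' := by
  classical
  letI : MeasurableSpace E := borel E
  haveI : BorelSpace E := ⟨rfl⟩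
  obtain ⟨S, hsub, hS⟩ := h
  obtain ⟨S', hsub', hS'⟩ := h'
  have h1 : (Bmeas.meas μ).toMeasure ↑S = 1 := (probCoe_eq_one_iff _ _).1 hS
  have h2 : (Bmeas.meas μ).toMeasure ↑S' = 1 := (probCoe_eq_one_iff _ _).1 hS'
  have hint : (Bmeas.meas μ).toMeasure ↑(S ∩ S') ≠ 0 := by
    rw [meas_finset_inter_one _ h1 h2]; exact one_ne_zero
  obtain ⟨e, he⟩ := MeasureTheory.nonempty_of_measure_ne_zero hint
  rw [Finset.coe_inter] at he
  have hb : p e = b := hsub he.1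
  have hb' : p e = b' := hsub' he.2
  rw [← hb, hb']

lemma fibProj_eq_of {n : ℕ} {p : E → B} (μ : FibMeas n p) {b : B}
    (h : DistributedOn μ.1 (p ⁻¹' {b})) : fibProj n p μ = b :=
  distributedOn_base_unique μ.1 (Classical.choose_spec μ.2) h

end BmeasAux
end AuxLemmas

/-- For a Hurewicz fibration `p : E → B` of metric spaces, the map
`B_n(p) : E_n(p) → B` is again a Hurewicz fibration. -/
theorem fibProj_isHurFib (n : ℕ) (hn : 1 ≤ n) (E B : Type) [MetricSpace E] [MetricSpace B]
    (p : E → B) (hp : Continuous p) (hfib : IsHurFib p) :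
    IsHurFib (fibProj n p) := by
  classical
  letI : MeasurableSpace E := borel E
  haveI : BorelSpace E := ⟨rfl⟩
  intro Z _ f H hH0
  -- the path-lifting function for `p`, obtained from the Hurewicz property
  obtain ⟨G', hG'p, hG'0⟩ := hfib {q : E × C(unitInterval, B) // p q.1 = q.2 0}
    ⟨fun q => q.1.1, (continuous_fst.comp continuous_subtype_val)⟩
    ⟨fun qt => qt.1.1.2 qt.2, by
      exact continuous_eval.comp
        ((continuous_snd.comp (continuous_subtype_val.comp continuous_fst)).prodMk
          continuous_snd)⟩
    (fun q => q.2.symm)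
  -- notation
  let Hz : Z → C(unitInterval, B) := fun z =>
    ⟨fun t => H (z, t), H.continuous.comp (Continuous.prodMk_right z)⟩
  have hHzcont : Continuous Hz := by
    have : Hz = fun z => H.curry z := by
      funext z; ext t; simp [Hz]
    rw [this]; exact H.curry.continuous
  let g : Z → unitInterval → E → E := fun z t e =>
    if h : p e = H (z, 0) then G' (⟨⟨e, Hz z⟩, h⟩, t) else e
  have hFibm : ∀ z : Z, MeasurableSet (p ⁻¹' {H (z, 0)}) :=
    fun z => (isClosed_singleton.preimage hp).measurableSet
  have hgm : ∀ z t, Measurable (g z t) := by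
    intro z t
    apply measurable_of_restrict_of_restrict_compl (s := p ⁻¹' {H (z, 0)}) (hFibm z)
    · have hres : (p ⁻¹' {H (z, 0)}).domRestrict (g z t) =
          fun e : (p ⁻¹' {H (z, 0)}) => G' (⟨⟨e.1, Hz z⟩, e.2⟩, t) :=
        funext fun e => dif_pos e.2
      rw [hres]
      exact (G'.continuous.comp
        (((continuous_subtype_val.prodMk continuous_const).subtype_mk _).prodMk
          continuous_const)).measurable
    · have hres : (p ⁻¹' {H (z, 0)})ᶜ.domRestrict (g z t) = Subtype.val :=
        funext fun e => dif_neg e.2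
      rw [hres]
      exact measurable_subtype_coe
  -- values of g on the fiber
  have hgval : ∀ z t e (h : p e = H (z, 0)), g z t e = G' (⟨⟨e, Hz z⟩, h⟩, t) :=
    fun z t e h => dif_pos h
  have hgproj : ∀ z t e, p e = H (z, 0) → p (g z t e) = H (z, t) := by
    intro z t e h
    rw [hgval z t e h, hG'p]
    rfl
  have hgzero : ∀ z e, p e = H (z, 0) → g z 0 e = e := by
    intro z e h
    rw [hgval z 0 e h, hG'0]
    rfl
  -- the underlying measures
  let mfun : Z → MeasureTheory.Measure E := fun z => (Bmeas.meas (f z).1).toMeasure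
  haveI hmp : ∀ z, MeasureTheory.IsProbabilityMeasure (mfun z) := fun z => inferInstance
  have key : ∀ z, DistributedOn (f z).1 (p ⁻¹' {H (z, 0)}) := by
    intro z
    rw [hH0 z]
    exact Classical.choose_spec (f z).2
  choose Sf hScard hSsub hSmeas using fun z => exists_good_support (f z) (key z)
  have hfib1 : ∀ z, mfun z (p ⁻¹' {H (z, 0)}) = 1 := by
    intro z
    apply le_antisymm MeasureTheory.prob_le_one
    rw [← hSmeas z]
    exact MeasureTheory.measure_mono (hSsub z)
  -- the lifted measures
  have hνprob : ∀ (z : Z) (t : unitInterval),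
      MeasureTheory.IsProbabilityMeasure ((mfun z).map (g z t)) :=
    fun z t => MeasureTheory.Measure.isProbabilityMeasure_map (hgm z t).aemeasurable
  let νLP : Z × unitInterval → LevyProkhorov (MeasureTheory.ProbabilityMeasure E) :=
    fun w => LevyProkhorov.toMeasureEquiv.symm ⟨(mfun w.1).map (g w.1 w.2), hνprob w.1 w.2⟩
  have hmapS : ∀ (z : Z) (t : unitInterval),
      ((mfun z).map (g z t)) ↑((Sf z).image (g z t)) = 1 := by
    intro z t
    rw [MeasureTheory.Measure.map_apply (hgm z t) (Finset.finite_toSet _).measurableSet]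
    apply le_antisymm MeasureTheory.prob_le_one
    rw [← hSmeas z]
    apply MeasureTheory.measure_mono
    intro e he
    exact Set.mem_preimage.2
      (Finset.mem_coe.2 (Finset.mem_image_of_mem _ (Finset.mem_coe.1 he)))
  have hBm : ∀ w : Z × unitInterval, ∃ S : Finset E, S.card ≤ n ∧
      (LevyProkhorov.toMeasureEquiv (νLP w) : MeasureTheory.ProbabilityMeasure E) (↑S : Set E) = 1 := by
    rintro ⟨z, t⟩
    refine ⟨(Sf z).image (g z t), le_trans Finset.card_image_le (hScard z), ?_⟩
    rw [probCoe_eq_one_iff]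
    exact hmapS z t
  let Gb : Z × unitInterval → Bmeas n E := fun w => ⟨νLP w, hBm w⟩
  have hDist : ∀ w : Z × unitInterval, DistributedOn (Gb w) (p ⁻¹' {H w}) := by
    rintro ⟨z, t⟩
    refine ⟨(Sf z).image (g z t), ?_, ?_⟩
    · intro x hx
      obtain ⟨e, heS, rfl⟩ := Finset.mem_image.1 (Finset.mem_coe.1 hx)
      have hpe : p e = H (z, 0) := hSsub z (Finset.mem_coe.2 heS)
      exact Set.mem_preimage.2 (Set.mem_singleton_iff.2 (hgproj z t e hpe))
    · rw [probCoe_eq_one_iff]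
      exact hmapS z t
  -- continuity of the lift
  have hcont : Continuous (fun w => (⟨Gb w, H w, hDist w⟩ : FibMeas n p)) := by
    apply Continuous.subtype_mk
    apply Continuous.subtype_mk
    rw [continuous_iff_continuousAt]
    rintro ⟨z₀, t₀⟩
    rw [ContinuousAt, Metric.tendsto_nhds]
    intro ε hε
    have hne : (Sf z₀).Nonempty := by
      rcases Finset.eq_empty_or_nonempty (Sf z₀) with h | h
      · exfalso
        have := hSmeas z₀
        rw [h] at this
        simp at this
      · exact h
    -- local continuity data around each point of the support of `f z₀`
    have hloc : ∀ e ∈ Sf z₀, ∃ δe > 0, ∃ We ∈ 𝓝 ((z₀, t₀) : Z × unitInterval),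
        ∀ (e' : E) (zt : Z × unitInterval), p e' = H (zt.1, 0) →
          dist e' e < δe → zt ∈ We → dist (g zt.1 zt.2 e') (g z₀ t₀ e) < ε / 2 := by
      intro e heS
      have hpe : p e = H (z₀, 0) := hSsub z₀ (Finset.mem_coe.2 heS)
      have hψcont : Continuous (fun q : {q : E × Z × unitInterval // p q.1 = H (q.2.1, 0)} =>
          g q.1.2.1 q.1.2.2 q.1.1) := by
        have hrw : (fun q : {q : E × Z × unitInterval // p q.1 = H (q.2.1, 0)} =>
            g q.1.2.1 q.1.2.2 q.1.1) =
            fun q => G' (⟨⟨q.1.1, Hz q.1.2.1⟩, q.2⟩, q.1.2.2) := funext fun q => dif_pos q.2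
        rw [hrw]
        apply G'.continuous.comp
        apply Continuous.prodMk
        · apply Continuous.subtype_mk
          exact (continuous_fst.comp continuous_subtype_val).prodMk
            (hHzcont.comp (continuous_fst.comp (continuous_snd.comp continuous_subtype_val)))
        · exact continuous_snd.comp (continuous_snd.comp continuous_subtype_val)
      have hC : ContinuousAt (fun q : {q : E × Z × unitInterval // p q.1 = H (q.2.1, 0)} =>
          g q.1.2.1 q.1.2.2 q.1.1) ⟨(e, z₀, t₀), hpe⟩ := hψcont.continuousAt
      have hpre := hC (Metric.ball_mem_nhds (g z₀ t₀ e) (by positivity : (0:ℝ) < ε / 2))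
      rw [Filter.mem_map] at hpre
      rw [mem_nhds_induced] at hpre
      obtain ⟨U, hU, hUsub⟩ := hpre
      rw [mem_nhds_prod_iff] at hU
      obtain ⟨V, hV, W, hW, hVW⟩ := hU
      obtain ⟨δe, hδe, hball⟩ := Metric.mem_nhds_iff.1 hV
      refine ⟨δe, hδe, W, hW, ?_⟩
      intro e' zt hf hd hzt
      have hmem : (⟨(e', zt), hf⟩ : {q : E × Z × unitInterval // p q.1 = H (q.2.1, 0)}) ∈
          Subtype.val ⁻¹' U := by
        apply Set.mem_preimage.2
        apply hVW
        exact Set.mk_mem_prod (hball (Metric.mem_ball.2 hd)) hzt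
      have := hUsub hmem
      exact Metric.mem_ball.1 this
    choose! δf hδf Wf hWf hP using hloc
    have hδpos : 0 < (Sf z₀).inf' hne δf := by
      rw [Finset.lt_inf'_iff]
      exact fun e he => hδf e he
    set δ := (Sf z₀).inf' hne δf with hδdef
    have hWmem : (⋂ e ∈ Sf z₀, Wf e) ∈ 𝓝 ((z₀, t₀) : Z × unitInterval) :=
      (Filter.biInter_finset_mem _).2 fun e he => hWf e he
    have hfc : Continuous (fun w : Z × unitInterval =>
        ((f w.1).1.1 : LevyProkhorov (MeasureTheory.ProbabilityMeasure E))) :=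
      (continuous_subtype_val.comp (continuous_subtype_val : Continuous (fun μ : FibMeas n p => μ.1))).comp
        (f.continuous.comp continuous_fst)
    have hev2 : ∀ᶠ w : Z × unitInterval in 𝓝 (z₀, t₀),
        dist ((f w.1).1.1 : LevyProkhorov (MeasureTheory.ProbabilityMeasure E)) ((f z₀).1.1)
          < min δ (ε / 2) :=
      hfc.tendsto (z₀, t₀) (Metric.ball_mem_nhds _ (lt_min hδpos (by positivity)))
    filter_upwards [hWmem, hev2] with w hw hd
    obtain ⟨z, t⟩ := w
    haveI := hνprob z t
    haveI := hνprob z₀ t₀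
    have hedist : MeasureTheory.levyProkhorovEDist (mfun z₀) (mfun z)
        < ENNReal.ofReal (min δ (ε / 2)) := by
      rw [ENNReal.lt_ofReal_iff_toReal_lt (MeasureTheory.levyProkhorovEDist_ne_top _ _)]
      have hdd : dist ((f z).1.1 : LevyProkhorov (MeasureTheory.ProbabilityMeasure E))
          ((f z₀).1.1) = MeasureTheory.levyProkhorovDist (mfun z) (mfun z₀) := rfl
      calc (MeasureTheory.levyProkhorovEDist (mfun z₀) (mfun z)).toReal
          = MeasureTheory.levyProkhorovDist (mfun z₀) (mfun z) := rfl
        _ = MeasureTheory.levyProkhorovDist (mfun z) (mfun z₀) :=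
            MeasureTheory.levyProkhorovDist_comm _ _
        _ < min δ (ε / 2) := by rw [← hdd]; exact hd
    have hclose : ∀ e ∈ Sf z₀, ∀ e' ∈ p ⁻¹' {H (z, 0)},
        dist e e' < δ → dist (g z t e') (g z₀ t₀ e) < ε / 2 := by
      intro e heS e' he'F hdist
      apply hP e heS e' (z, t) he'F
      · rw [dist_comm]
        exact lt_of_lt_of_le hdist (Finset.inf'_le _ heS)
      · exact Set.mem_iInter₂.1 hw e heS
    have hmain := push_dist_le (hgm z t) (hgm z₀ t₀) (hSmeas z₀) (hFibm z) (hfib1 z)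
      hδpos (by positivity : (0:ℝ) < ε / 2) hclose hedist
    have hdeq : dist (νLP (z, t)) (νLP (z₀, t₀)) =
        MeasureTheory.levyProkhorovDist ((mfun z).map (g z t)) ((mfun z₀).map (g z₀ t₀)) := rfl
    calc dist (νLP (z, t)) (νLP (z₀, t₀))
        = MeasureTheory.levyProkhorovDist ((mfun z).map (g z t)) ((mfun z₀).map (g z₀ t₀)) :=
          hdeq
      _ ≤ ε / 2 := hmain
      _ < ε := by linarith
  refine ⟨⟨fun w => ⟨Gb w, H w, hDist w⟩, hcont⟩, ?_, ?_⟩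
  · intro z t
    exact fibProj_eq_of _ (hDist (z, t))
  · intro z
    apply Subtype.ext
    apply Subtype.ext
    show νLP (z, 0) = (f z).1.1
    have hmeq : (mfun z).map (g z 0) = mfun z := by
      have hae : g z 0 =ᶠ[MeasureTheory.ae (mfun z)] id := by
        rw [Filter.EventuallyEq, MeasureTheory.ae_iff]
        apply MeasureTheory.measure_mono_null
          (?_ : _ ⊆ (p ⁻¹' {H (z, 0)})ᶜ)
        · rw [MeasureTheory.measure_compl (hFibm z) (MeasureTheory.measure_ne_top _ _),
            hfib1 z, MeasureTheory.measure_univ, tsub_self]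
        · intro e he
          simp only [Set.mem_compl_iff, Set.mem_preimage, Set.mem_singleton_iff]
          intro hpe
          exact he (hgzero z e hpe)
      calc (mfun z).map (g z 0) = (mfun z).map id := MeasureTheory.Measure.map_congr hae
        _ = mfun z := MeasureTheory.Measure.map_id
    exact congrArg (LevyProkhorov.toMeasureEquiv (α := MeasureTheory.ProbabilityMeasure E)).symm
      (@MeasureTheory.ProbabilityMeasure.toMeasure_injective E _ ⟨_, hνprob z 0⟩ (Bmeas.meas (f z).1) hmeq)
end
end

section
/- The distributional sectional category is a (fiberwise) homotopy invariant: given fibrations p : E → B and q : Z → C, homotopy equivalences f : E → Z and g : B → C with homotopy inverses f', g', making the square q ∘ f = g ∘ p and p ∘ f' = g' ∘ q commute, one has dsecat(p) = dsecat(q). -/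
open MeasureTheory unitInterval

noncomputable section

open Metric Set
open scoped ENNReal NNReal

section Aux

lemma probMeas_coe_one {Ω : Type*} [MeasurableSpace Ω] (P : ProbabilityMeasure Ω) {A : Set Ω} :
    P A = 1 ↔ P.toMeasure A = 1 := by
  rw [← ENNReal.coe_inj, ProbabilityMeasure.ennreal_coeFn_eq_coeFn_toMeasure, ENNReal.coe_one]

lemma meas_inter_one {Ω : Type*} [MeasurableSpace Ω] (m : Measure Ω) [IsProbabilityMeasure m]
    {A B' : Set Ω} (hB : MeasurableSet B')
    (h1 : m A = 1) (h2 : m B' = 1) : m (A ∩ B') = 1 := by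
  have key := measure_union_add_inter (μ := m) A hB
  rw [h1, h2] at key
  have hle : m (A ∪ B') ≤ 1 := prob_le_one
  have h1le : (1 : ℝ≥0∞) ≤ m (A ∩ B') := by
    by_contra hlt
    push_neg at hlt
    have : m (A ∪ B') + m (A ∩ B') < 1 + 1 :=
      ENNReal.add_lt_add_of_le_of_lt (by simp) hle hlt
    rw [key] at this
    exact lt_irrefl _ this
  exact le_antisymm prob_le_one h1le

variable {α : Type*} [MeasurableSpace α] [MeasurableSingletonClass α]

lemma meas_finset_eq_sum (μ : Measure α) (s : Finset α) :
    μ (↑s : Set α) = ∑ x ∈ s, μ {x} := by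
  rw [← measure_biUnion_finset (fun x _ y _ hxy => by simp [Set.disjoint_singleton, hxy])
    (fun b _ => measurableSet_singleton b)]
  congr 1
  exact (Set.biUnion_of_singleton (↑s : Set α)).symm

variable {β : Type*} [MeasurableSpace β]

open Classical in
/-- Explicit pushforward of a finitely supported measure. -/
def pushMeas (μ : Measure α) (S : Finset α) (v : α → β) : Measure β :=
  ∑ x ∈ S, μ {x} • Measure.dirac (v x)

open Classical in
lemma pushMeas_apply (μ : Measure α) (S : Finset α) (v : α → β) {A : Set β}
    (hA : MeasurableSet A) :
    pushMeas μ S v A = μ ((↑S : Set α) ∩ v ⁻¹' A) := by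
  have hc : ((↑(S.filter (fun x => v x ∈ A)) : Set α)) = (↑S : Set α) ∩ v ⁻¹' A := by
    ext x
    simp [Finset.mem_filter, Set.mem_preimage]
  rw [pushMeas, Measure.finset_sum_apply, ← hc, meas_finset_eq_sum]
  rw [Finset.sum_filter]
  congr 1
  ext x
  rw [Measure.smul_apply, Measure.dirac_apply' _ hA]
  by_cases h : v x ∈ A <;> simp [h, Set.indicator_of_mem, Set.indicator_of_notMem]

lemma pushMeas_isProb (μ : Measure α) (S : Finset α) (v : α → β)
    (hS : μ (↑S : Set α) = 1) : IsProbabilityMeasure (pushMeas μ S v) := by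
  classical
  constructor
  rw [pushMeas_apply _ _ _ MeasurableSet.univ]
  simpa using hS

end Aux

section Estimate
variable {Z E : Type*} [MetricSpace Z] [MetricSpace E]
    [MeasurableSpace Z] [BorelSpace Z] [MeasurableSpace E] [BorelSpace E]

lemma pushMeas_LPdist_le
    (μ ν : Measure Z) [IsProbabilityMeasure μ] [IsProbabilityMeasure ν]
    (S T : Finset Z) (hμS : μ (↑S : Set Z) = 1) (hνT : ν (↑T : Set Z) = 1)
    (v w : Z → E) {δ η : ℝ} (hδ : 0 < δ) (hδη : δ ≤ η)
    (hLP : levyProkhorovEDist μ ν < ENNReal.ofReal δ)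
    (hclose : ∀ x ∈ S, ∀ y ∈ T, dist x y < δ → dist (v x) (w y) ≤ η) :
    levyProkhorovDist (pushMeas μ S v) (pushMeas ν T w) ≤ η := by
  classical
  haveI := pushMeas_isProb μ S v hμS
  haveI := pushMeas_isProb ν T w hνT
  apply levyProkhorovDist_le_of_forall_le _ _ (hδ.le.trans hδη)
  intro ε A hε hA
  set T₁ : Set Z := (↑S : Set Z) ∩ v ⁻¹' A with hT₁
  set T₂ : Set Z := (↑T : Set Z) ∩ w ⁻¹' (thickening ε A) with hT₂
  have hT₁fin : T₁.Finite := S.finite_toSet.inter_of_left _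
  have step1 : pushMeas μ S v A = μ T₁ := pushMeas_apply μ S v hA
  have step2 : μ T₁ ≤ ν (thickening δ T₁) + ENNReal.ofReal δ := by
    have := left_measure_le_of_levyProkhorovEDist_lt hLP
      (B := T₁) hT₁fin.measurableSet
    rwa [ENNReal.toReal_ofReal hδ.le] at this
  have hνTc : ν ((↑T : Set Z)ᶜ) = 0 := by
    have := measure_compl (T.finite_toSet.measurableSet) (measure_ne_top ν _)
    rw [hνT, measure_univ] at this
    simp [this]
  have step3 : ν (thickening δ T₁) ≤ ν T₂ := by
    have hsub : thickening δ T₁ ∩ (↑T : Set Z) ⊆ T₂ := by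
      rintro y ⟨hy1, hy2⟩
      obtain ⟨x, hxT₁, hxy⟩ := Metric.mem_thickening_iff.mp hy1
      obtain ⟨hxS, hvxA⟩ := hxT₁
      have hd : dist x y < δ := by rw [dist_comm]; exact hxy
      have := hclose x hxS y hy2 hd
      refine ⟨hy2, ?_⟩
      exact Metric.mem_thickening_iff.mpr
        ⟨v x, hvxA, lt_of_le_of_lt (dist_comm (v x) (w y) ▸ this) hε⟩
    calc ν (thickening δ T₁)
        ≤ ν (thickening δ T₁ ∩ (↑T : Set Z)) + ν ((↑T : Set Z)ᶜ) := by
          apply (measure_mono _).trans (measure_union_le _ _)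
          intro z hz
          by_cases h : z ∈ (↑T : Set Z)
          · exact Or.inl ⟨hz, h⟩
          · exact Or.inr h
      _ = ν (thickening δ T₁ ∩ (↑T : Set Z)) := by rw [hνTc, add_zero]
      _ ≤ ν T₂ := measure_mono hsub
  have step4 : ν T₂ = pushMeas ν T w (thickening ε A) :=
    (pushMeas_apply ν T w isOpen_thickening.measurableSet).symm
  calc pushMeas μ S v A = μ T₁ := step1
    _ ≤ ν (thickening δ T₁) + ENNReal.ofReal δ := step2
    _ ≤ ν T₂ + ENNReal.ofReal ε :=
        add_le_add step3 (ENNReal.ofReal_le_ofReal (hδη.trans hε.le))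
    _ = pushMeas ν T w (thickening ε A) + ENNReal.ofReal ε := by rw [step4]
end Estimate

section FibProj

lemma fibProj_unique {E B : Type*} [MetricSpace E] (p : E → B) {k : ℕ}
    (w : FibMeas k p) {b : B} (hb : DistributedOn w.1 (p ⁻¹' {b})) :
    fibProj k p w = b := by
  letI : MeasurableSpace E := borel E
  haveI : BorelSpace E := ⟨rfl⟩
  obtain ⟨S', hS'sub, hS'1⟩ := Classical.choose_spec w.2
  obtain ⟨S, hSsub, hS1⟩ := hb
  set m : Measure E := (Bmeas.meas w.1).toMeasure with hm
  have h1 : m (↑S : Set E) = 1 := (probMeas_coe_one _).mp hS1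
  have h2 : m (↑S' : Set E) = 1 := (probMeas_coe_one _).mp hS'1
  have hinter : m ((↑S : Set E) ∩ (↑S' : Set E)) = 1 :=
    meas_inter_one m (S'.finite_toSet.measurableSet) h1 h2
  have hne : ((↑S : Set E) ∩ (↑S' : Set E)).Nonempty := by
    apply MeasureTheory.nonempty_of_measure_ne_zero (μ := m)
    rw [hinter]; exact one_ne_zero
  obtain ⟨x, hxS, hxS'⟩ := hne
  have e1 : p x = b := hSsub hxS
  have e2 : p x = fibProj k p w := hS'sub hxS'
  rw [← e2, e1]

end FibProj


section Main

lemma dsecat_le_aux {E B Z C : Type}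
    [MetricSpace E] [MetricSpace B] [MetricSpace Z] [MetricSpace C]
    (p : E → B) (q : Z → C)
    (hpfib : IsHurFib p) (f' : C(Z, E)) (g : C(B, C)) (g' : C(C, B))
    (hg : (g'.comp g).Homotopic (ContinuousMap.id B))
    (hsq' : ∀ z, p (f' z) = g' (q z)) :
    dsecat p ≤ dsecat q := by
  apply sInf_le_sInf
  rintro c ⟨k, rfl, s, hs_cont, hs_sec⟩
  refine ⟨k, rfl, ?_⟩
  classical
  letI : MeasurableSpace Z := borel Z
  haveI : BorelSpace Z := ⟨rfl⟩
  letI : MeasurableSpace E := borel E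
  haveI : BorelSpace E := ⟨rfl⟩
  obtain ⟨G⟩ := hg
  -- Lift the homotopy against the fibration p to get a fiber translation map Φ
  set W : Type := {x : B × E // p x.2 = g' (g x.1)} with hW
  have hf₀ : Continuous (fun w : W => w.1.2) := continuous_snd.comp continuous_subtype_val
  have hH₀ : Continuous (fun wt : W × unitInterval => G (wt.2, wt.1.1.1)) :=
    G.continuous.comp (continuous_snd.prodMk (continuous_fst.comp
      (continuous_subtype_val.comp continuous_fst)))
  obtain ⟨L, hL1, hL2⟩ := hpfib W ⟨fun w => w.1.2, hf₀⟩
    ⟨fun wt => G (wt.2, wt.1.1.1), hH₀⟩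
    (fun w => by
      simp only [ContinuousMap.coe_mk]
      rw [G.apply_zero]
      exact w.2.symm)
  set Φ : W → E := fun w => L (w, 1) with hΦ
  have hΦcont : Continuous Φ := L.continuous.comp (continuous_id.prodMk continuous_const)
  have hΦp : ∀ w : W, p (Φ w) = w.1.1 := by
    intro w
    have := hL1 w 1
    simp only [ContinuousMap.coe_mk] at this
    rw [hΦ]
    rw [this, G.apply_one]
    rfl
  -- The map Ψ on pairs (b, z) with q z = g b
  set V : Type := {x : B × Z // q x.2 = g x.1} with hV
  set Ψ : V → E := fun vz => Φ ⟨(vz.1.1, f' vz.1.2), by rw [hsq', vz.2]⟩ with hΨdef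
  have hΨcont : Continuous Ψ := by
    apply hΦcont.comp
    apply Continuous.subtype_mk
    exact (continuous_fst.comp continuous_subtype_val).prodMk
      (f'.continuous.comp (continuous_snd.comp continuous_subtype_val))
  have hΨp : ∀ vz : V, p (Ψ vz) = vz.1.1 := fun vz => hΦp _
  -- the section data of q, distributed over the correct fiber
  have hdist : ∀ b : B, DistributedOn (s (g b)).1 (q ⁻¹' {g b}) := by
    intro b
    have h1 := Classical.choose_spec (s (g b)).2
    have h2 : Classical.choose (s (g b)).2 = g b := hs_sec (g b)
    rwa [h2] at h1
  -- choose good finsets: small card, in the fiber, full measure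
  set μmeas : B → Measure Z := fun b => (Bmeas.meas (s (g b)).1).toMeasure with hμmeas
  have hμprob : ∀ b, IsProbabilityMeasure (μmeas b) := fun b => (Bmeas.meas (s (g b)).1).2
  have hboth : ∀ b : B, ∃ S : Finset Z, S.card ≤ k + 1 ∧
      (↑S : Set Z) ⊆ q ⁻¹' {g b} ∧ μmeas b (↑S : Set Z) = 1 := by
    intro b
    obtain ⟨S₁, hS₁sub, hS₁1⟩ := hdist b
    obtain ⟨S₀, hS₀card, hS₀1⟩ := (s (g b)).1.2
    refine ⟨S₀ ∩ S₁, le_trans (Finset.card_le_card Finset.inter_subset_left) hS₀card,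
      ?_, ?_⟩
    · exact fun x hx => hS₁sub (Finset.mem_coe.mpr
        (Finset.mem_of_mem_inter_right (Finset.mem_coe.mp hx)))
    · have h0 : μmeas b (↑S₀ : Set Z) = 1 := (probMeas_coe_one _).mp hS₀1
      have h1 : μmeas b (↑S₁ : Set Z) = 1 := (probMeas_coe_one _).mp hS₁1
      have := meas_inter_one (μmeas b) (S₁.finite_toSet.measurableSet) h0 h1
      rwa [← Finset.coe_inter] at this
  set Sb : B → Finset Z := fun b => Classical.choose (hboth b) with hSbdef
  have hSb : ∀ b, (Sb b).card ≤ k + 1 ∧ (↑(Sb b) : Set Z) ⊆ q ⁻¹' {g b} ∧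
      μmeas b (↑(Sb b) : Set Z) = 1 := fun b => Classical.choose_spec (hboth b)
  -- the (partial) fiberwise transported map
  set v : B → Z → E := fun b z => if h : q z = g b then Ψ ⟨(b, z), h⟩ else f' z with hvdef
  have hv_eq : ∀ b z (h : q z = g b), v b z = Ψ ⟨(b, z), h⟩ := by
    intro b z h
    simp only [hvdef, dif_pos h]
  have hv_fib : ∀ b, ∀ x ∈ Sb b, p (v b x) = b := by
    intro b x hx
    have hq : q x = g b := (hSb b).2.1 (Finset.mem_coe.mpr hx)
    rw [hv_eq b x hq, hΨp]
  -- the pushforward measures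
  set ν : B → Measure E := fun b => pushMeas (μmeas b) (Sb b) (v b) with hνdef
  have hνprob : ∀ b, IsProbabilityMeasure (ν b) :=
    fun b => pushMeas_isProb _ _ _ (hSb b).2.2
  set Tb : B → Finset E := fun b => (Sb b).image (v b) with hTbdef
  have hν_on_T : ∀ b, ν b (↑(Tb b) : Set E) = 1 := by
    intro b
    rw [hνdef]
    rw [pushMeas_apply _ _ _ ((Tb b).finite_toSet.measurableSet)]
    have hss : (↑(Sb b) : Set Z) ⊆ v b ⁻¹' (↑(Tb b) : Set E) := by
      intro x hx
      exact Set.mem_preimage.mpr (Finset.mem_coe.mpr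
        (Finset.mem_image_of_mem _ (Finset.mem_coe.mp hx)))
    rw [Set.inter_eq_self_of_subset_left hss]
    exact (hSb b).2.2
  -- package as elements of FibMeas (k+1) p
  set νP : B → ProbabilityMeasure E := fun b => ⟨ν b, hνprob b⟩ with hνPdef
  have hmem : ∀ b, ∃ S : Finset E, S.card ≤ k + 1 ∧
      ((LevyProkhorov.toMeasureEquiv ((LevyProkhorov.toMeasureEquiv (α := ProbabilityMeasure E)).symm (νP b)) :
        ProbabilityMeasure E) (↑S : Set E) = 1) := by
    intro b
    refine ⟨Tb b, le_trans Finset.card_image_le (hSb b).1, ?_⟩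
    rw [probMeas_coe_one]
    exact hν_on_T b
  set sB : B → Bmeas (k + 1) E := fun b =>
    ⟨(LevyProkhorov.toMeasureEquiv (α := ProbabilityMeasure E)).symm (νP b), hmem b⟩ with hsBdef
  have hdistB : ∀ b, DistributedOn (sB b) (p ⁻¹' {b}) := by
    intro b
    refine ⟨Tb b, ?_, ?_⟩
    · intro e he
      obtain ⟨x, hx, rfl⟩ := Finset.mem_image.mp (Finset.mem_coe.mp he)
      exact hv_fib b x hx
    · rw [probMeas_coe_one]
      exact hν_on_T b
  have hfibmem : ∀ b, ∃ b' : B, DistributedOn (sB b) (p ⁻¹' {b'}) :=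
    fun b => ⟨b, hdistB b⟩
  set s' : B → FibMeas (k + 1) p := fun b => ⟨sB b, hfibmem b⟩ with hs'def
  refine ⟨s', ?_, ?_⟩
  · -- Continuity
    apply Continuous.subtype_mk
    apply Continuous.subtype_mk
    rw [continuous_iff_continuousAt]
    intro b₀
    rw [Metric.continuousAt_iff]
    intro ε hε
    -- continuity of the underlying measures of the section s
    set m : B → LevyProkhorov (ProbabilityMeasure Z) := fun b => (s (g b)).1.1 with hmdef
    have hm : Continuous m :=
      (continuous_subtype_val.comp (continuous_subtype_val : Continuous (fun μ : FibMeas (k + 1) q => μ.1))).comp (hs_cont.comp g.continuous)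
    -- the support finset at b₀ is nonempty
    have hSne : (Sb b₀).Nonempty := by
      rw [← Finset.coe_nonempty]
      apply MeasureTheory.nonempty_of_measure_ne_zero (μ := μmeas b₀)
      rw [(hSb b₀).2.2]
      exact one_ne_zero
    -- pointwise moduli of continuity of the transported map at support points
    have hptwise : ∀ y ∈ Sb b₀, ∃ d : ℝ, 0 < d ∧ ∀ (b : B) (x : Z), q x = g b →
        dist b b₀ < d → dist x y < d → dist (v b x) (v b₀ y) < ε / 2 := by
      intro y hy
      have hqy : q y = g b₀ := (hSb b₀).2.1 (Finset.mem_coe.mpr hy)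
      have hc := hΨcont.continuousAt (x := (⟨(b₀, y), hqy⟩ : V))
      rw [Metric.continuousAt_iff] at hc
      obtain ⟨d, hd, hball⟩ := hc (ε / 2) (by positivity)
      refine ⟨d, hd, ?_⟩
      intro b x hx hb hxy
      rw [hv_eq b x hx, hv_eq b₀ y hqy]
      apply hball
      rw [Subtype.dist_eq, Prod.dist_eq]
      exact max_lt hb hxy
    choose! dfun hdpos hdball using hptwise
    set δ₁ : ℝ := (Sb b₀).inf' hSne dfun with hδ₁def
    have hδ₁pos : 0 < δ₁ := by
      rw [hδ₁def, Finset.lt_inf'_iff]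
      exact fun y hy => hdpos y hy
    have hδ₁le : ∀ y ∈ Sb b₀, δ₁ ≤ dfun y := fun y hy => Finset.inf'_le _ hy
    set δfin : ℝ := min δ₁ (ε / 2) with hδfindef
    have hδfinpos : 0 < δfin := lt_min hδ₁pos (by positivity)
    have hmc := hm.continuousAt (x := b₀)
    rw [Metric.continuousAt_iff] at hmc
    obtain ⟨δ₂, hδ₂, hm2⟩ := hmc δfin hδfinpos
    refine ⟨min δ₂ δfin, lt_min hδ₂ hδfinpos, ?_⟩
    intro b hb
    haveI := hμprob b
    haveI := hμprob b₀
    have key : levyProkhorovDist (ν b) (ν b₀) ≤ ε / 2 := by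
      apply pushMeas_LPdist_le (μmeas b) (μmeas b₀) (Sb b) (Sb b₀)
        (hSb b).2.2 (hSb b₀).2.2 (v b) (v b₀) hδfinpos (min_le_right _ _)
      · have hdist : dist (m b) (m b₀) < δfin :=
          hm2 (lt_of_lt_of_le hb (min_le_left _ _))
        have hne : levyProkhorovEDist (μmeas b) (μmeas b₀) ≠ ⊤ :=
          levyProkhorovEDist_ne_top _ _
        rw [ENNReal.lt_ofReal_iff_toReal_lt hne]
        exact hdist
      · intro x hx y hy hxy
        have hqx : q x = g b := (hSb b).2.1 (Finset.mem_coe.mpr hx)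
        apply le_of_lt
        apply hdball y hy b x hqx
        · calc dist b b₀ < min δ₂ δfin := hb
            _ ≤ δfin := min_le_right _ _
            _ ≤ δ₁ := min_le_left _ _
            _ ≤ dfun y := hδ₁le y hy
        · calc dist x y < δfin := hxy
            _ ≤ δ₁ := min_le_left _ _
            _ ≤ dfun y := hδ₁le y hy
    calc dist ((LevyProkhorov.toMeasureEquiv (α := ProbabilityMeasure E)).symm (νP b))
          ((LevyProkhorov.toMeasureEquiv (α := ProbabilityMeasure E)).symm (νP b₀))
        = levyProkhorovDist (ν b) (ν b₀) := rfl
      _ ≤ ε / 2 := key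
      _ < ε := by linarith
  · intro b
    exact fibProj_unique p (s' b) (hdistB b)

end Main

/-- `dsecat` is a homotopy invariant: given Hurewicz fibrations `p : E → B`, `q : Z → C`
and homotopy equivalences `f : E → Z`, `g : B → C` (with homotopy inverses `f'`, `g'`)
such that `q ∘ f = g ∘ p` and `p ∘ f' = g' ∘ q`, we have `dsecat p = dsecat q`. -/
theorem dsecat_homotopy_invariant (E B Z C : Type)
    [MetricSpace E] [MetricSpace B] [MetricSpace Z] [MetricSpace C]
    (p : E → B) (q : Z → C) (hp : Continuous p) (hq : Continuous q)
    (hpfib : IsHurFib p) (hqfib : IsHurFib q)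
    (f : C(E, Z)) (f' : C(Z, E)) (g : C(B, C)) (g' : C(C, B))
    (hf : (f'.comp f).Homotopic (ContinuousMap.id E))
    (hf' : (f.comp f').Homotopic (ContinuousMap.id Z))
    (hg : (g'.comp g).Homotopic (ContinuousMap.id B))
    (hg' : (g.comp g').Homotopic (ContinuousMap.id C))
    (hsq : ∀ e : E, q (f e) = g (p e)) (hsq' : ∀ z : Z, p (f' z) = g' (q z)) :
    dsecat p = dsecat q :=
  le_antisymm (dsecat_le_aux p q hpfib f' g g' hg hsq')
    (dsecat_le_aux q p hqfib f g' g hg' hsq)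
end
end

section
/- Ganea–Schwarz-type characterization of dTC_m: for a path-connected metric space X and m ≥ 2, dTC_m(X) ≤ n if and only if the fibration B_{n+1}(π_m) : P(X)_{n+1}(π_m) → X^m admits a continuous section. Consequently, dTC_m(X) = dsecat(π_m). -/
open MeasureTheory unitInterval

noncomputable section

section Aux

variable {Z : Type*} [MetricSpace Z]

lemma distributedOn_inter_nonempty {n : ℕ} {μ : Bmeas n Z} {A B : Set Z}
    (hA : DistributedOn μ A) (hB : DistributedOn μ B) : (A ∩ B).Nonempty := by
  letI : MeasurableSpace Z := borel Z
  haveI : BorelSpace Z := ⟨rfl⟩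
  obtain ⟨S, hSA, hS⟩ := hA
  obtain ⟨T, hTB, hT⟩ := hB
  set ν : ProbabilityMeasure Z := Bmeas.meas μ with hν
  have hSm : (ν : Measure Z) (↑S : Set Z) = 1 := by
    rw [← ProbabilityMeasure.ennreal_coeFn_eq_coeFn_toMeasure, hS]; rfl
  have hTm : (ν : Measure Z) (↑T : Set Z) = 1 := by
    rw [← ProbabilityMeasure.ennreal_coeFn_eq_coeFn_toMeasure, hT]; rfl
  have hScl : MeasurableSet (↑S : Set Z) := S.finite_toSet.isClosed.measurableSet
  rcases ((↑S : Set Z) ∩ (↑T : Set Z)).eq_empty_or_nonempty with hemp | hne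
  · exfalso
    have hTsub : (↑T : Set Z) ⊆ (↑S : Set Z)ᶜ := fun z hzT hzS =>
      Set.eq_empty_iff_forall_notMem.mp hemp z ⟨hzS, hzT⟩
    have hcompl : (ν : Measure Z) ((↑S : Set Z)ᶜ) = 0 := by
      rw [measure_compl hScl (measure_ne_top _ _), hSm, measure_univ, tsub_self]
    have h0 : (ν : Measure Z) (↑T : Set Z) = 0 := measure_mono_null hTsub hcompl
    rw [hTm] at h0
    exact one_ne_zero h0
  · obtain ⟨z, hz⟩ := hne
    exact ⟨z, hSA hz.1, hTB hz.2⟩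

lemma fiber_eq {k : ℕ} {E B : Type*} [MetricSpace E] (p : E → B) (μ : Bmeas k E) {b b' : B}
    (h : DistributedOn μ (p ⁻¹' {b})) (h' : DistributedOn μ (p ⁻¹' {b'})) : b = b' := by
  obtain ⟨z, hz, hz'⟩ := distributedOn_inter_nonempty h h'
  rw [← hz, ← hz']

lemma fibProj_spec (k : ℕ) {E B : Type*} [MetricSpace E] (p : E → B) (μ : FibMeas k p) :
    DistributedOn μ.1 (p ⁻¹' {fibProj k p μ}) :=
  Classical.choose_spec μ.2

lemma fibProj_eq {k : ℕ} {E B : Type*} [MetricSpace E] (p : E → B) (μ : FibMeas k p) {b : B}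
    (h : DistributedOn μ.1 (p ⁻¹' {b})) : fibProj k p μ = b :=
  fiber_eq p μ.1 (fibProj_spec k p μ) h

/-- Inclusion `B_k(Z) → B_n(Z)` for `k ≤ n`. -/
def bmeasIncl {k n : ℕ} (h : k ≤ n) (μ : Bmeas k Z) : Bmeas n Z :=
  ⟨μ.1, μ.2.imp fun _ hS => ⟨hS.1.trans h, hS.2⟩⟩

lemma continuous_bmeasIncl {k n : ℕ} (h : k ≤ n) :
    Continuous (bmeasIncl h : Bmeas k Z → Bmeas n Z) := by
  letI : MeasurableSpace Z := borel Z
  haveI : BorelSpace Z := ⟨rfl⟩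
  exact Continuous.subtype_mk continuous_subtype_val _

lemma distributedOn_bmeasIncl {k n : ℕ} (h : k ≤ n) (μ : Bmeas k Z) (A : Set Z) :
    DistributedOn (bmeasIncl h μ) A ↔ DistributedOn μ A := Iff.rfl

lemma preimage_piFib (m : ℕ) (X : Type*) [MetricSpace X] (x : Fin m → X) :
    piFib m X ⁻¹' {x} = {φ : PathSp X | ∀ j, φ (tpt m j) = x j} := by
  ext φ
  simp [piFib, funext_iff]

/-- Equivalence between `n`-distributed navigation algorithms and sections of
`B_n(π_m)`. -/
lemma navAlg_iff_section (m n : ℕ) (X : Type*) [MetricSpace X] :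
    (∃ s : (Fin m → X) → Bmeas n (PathSp X), IsNavAlg m n s) ↔
    (∃ s : (Fin m → X) → FibMeas n (piFib m X),
      Continuous s ∧ ∀ x, fibProj n (piFib m X) (s x) = x) := by
  constructor
  · rintro ⟨s, hc, hd⟩
    have hd' : ∀ x, DistributedOn (s x) (piFib m X ⁻¹' {x}) := fun x => by
      rw [preimage_piFib]; exact hd x
    refine ⟨fun x => ⟨s x, x, hd' x⟩, Continuous.subtype_mk hc _, fun x => ?_⟩
    exact fibProj_eq (piFib m X) _ (hd' x)
  · rintro ⟨sa, hc, hp⟩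
    refine ⟨fun x => (sa x).1, continuous_subtype_val.comp hc, fun x => ?_⟩
    have h := fibProj_spec n (piFib m X) (sa x)
    rw [hp x, preimage_piFib] at h
    exact h

/-- Inclusion `E_k(p) → E_n(p)` for `k ≤ n`. -/
def fibMeasIncl {k n : ℕ} (h : k ≤ n) {E B : Type*} [MetricSpace E] (p : E → B)
    (μ : FibMeas k p) : FibMeas n p :=
  ⟨bmeasIncl h μ.1, μ.2.imp fun _ hb => hb⟩

lemma continuous_fibMeasIncl {k n : ℕ} (h : k ≤ n) {E B : Type*} [MetricSpace E] (p : E → B) :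
    Continuous (fibMeasIncl h p : FibMeas k p → FibMeas n p) :=
  Continuous.subtype_mk ((continuous_bmeasIncl h).comp continuous_subtype_val) _

lemma fibProj_fibMeasIncl {k n : ℕ} (h : k ≤ n) {E B : Type*} [MetricSpace E] (p : E → B)
    (μ : FibMeas k p) : fibProj n p (fibMeasIncl h p μ) = fibProj k p μ :=
  fibProj_eq p (fibMeasIncl h p μ) (fibProj_spec k p μ)

lemma isNavAlg_mono {m k n : ℕ} (h : k ≤ n) {X : Type*} [MetricSpace X]
    {s : (Fin m → X) → Bmeas k (PathSp X)} (hs : IsNavAlg m k s) :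
    IsNavAlg m n (fun x => bmeasIncl h (s x)) :=
  ⟨(continuous_bmeasIncl h).comp hs.1, fun x => hs.2 x⟩

lemma sInf_set_le_iff (P : ℕ → Prop) (n : ℕ) :
    sInf {c : ℕ∞ | ∃ k : ℕ, c = k ∧ P k} ≤ (n : ℕ∞) ↔ ∃ k, k ≤ n ∧ P k := by
  constructor
  · intro h
    by_contra hcon
    push_neg at hcon
    have hbig : ((n + 1 : ℕ) : ℕ∞) ≤ sInf {c : ℕ∞ | ∃ k : ℕ, c = k ∧ P k} := by
      apply le_sInf
      rintro c ⟨k, rfl, hPk⟩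
      have hk : n + 1 ≤ k := by
        by_contra hlt
        exact hcon k (by omega) hPk
      exact_mod_cast hk
    have : ((n + 1 : ℕ) : ℕ∞) ≤ (n : ℕ∞) := hbig.trans h
    have : n + 1 ≤ n := by exact_mod_cast this
    omega
  · rintro ⟨k, hk, hP⟩
    exact le_trans (sInf_le ⟨k, rfl, hP⟩) (by exact_mod_cast hk)

end Aux

/-- Ganea–Schwarz-type characterization of `dTC_m`: `dTC_m(X) ≤ n` iff the fibration
`B_{n+1}(π_m) : P(X)_{n+1}(π_m) → X^m` admits a continuous section; consequently
`dTC_m(X) = dsecat(π_m)`. -/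
theorem dTC_eq_dsecat (m : ℕ) (hm : 2 ≤ m) (X : Type) [MetricSpace X]
    [PathConnectedSpace X] :
    (∀ n : ℕ,
      dTC m X ≤ (n : ℕ∞) ↔
        ∃ s : (Fin m → X) → FibMeas (n + 1) (piFib m X),
          Continuous s ∧ ∀ x, fibProj (n + 1) (piFib m X) (s x) = x) ∧
    dTC m X = dsecat (piFib m X) := by
  classical
  have hdtc : ∀ n : ℕ,
      dTC m X ≤ (n : ℕ∞) ↔
        ∃ s : (Fin m → X) → FibMeas (n + 1) (piFib m X),
          Continuous s ∧ ∀ x, fibProj (n + 1) (piFib m X) (s x) = x := by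
    intro n
    have := sInf_set_le_iff
      (fun k => ∃ s : (Fin m → X) → Bmeas (k + 1) (PathSp X), IsNavAlg m (k + 1) s) n
    rw [dTC, this]
    constructor
    · rintro ⟨k, hk, s, hs⟩
      exact (navAlg_iff_section m (n + 1) X).mp
        ⟨fun x => bmeasIncl (by omega) (s x), isNavAlg_mono (by omega) hs⟩
    · intro h
      exact ⟨n, le_refl n, (navAlg_iff_section m (n + 1) X).mpr h⟩
  have hds : ∀ n : ℕ,
      dsecat (piFib m X) ≤ (n : ℕ∞) ↔
        ∃ s : (Fin m → X) → FibMeas (n + 1) (piFib m X),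
          Continuous s ∧ ∀ x, fibProj (n + 1) (piFib m X) (s x) = x := by
    intro n
    have := sInf_set_le_iff
      (fun k => ∃ s : (Fin m → X) → FibMeas (k + 1) (piFib m X),
        Continuous s ∧ ∀ x, fibProj (k + 1) (piFib m X) (s x) = x) n
    rw [dsecat, this]
    constructor
    · rintro ⟨k, hk, s, hc, hp⟩
      refine ⟨fun x => fibMeasIncl (by omega) (piFib m X) (s x),
        (continuous_fibMeasIncl (by omega) (piFib m X)).comp hc, fun x => ?_⟩
      rw [fibProj_fibMeasIncl, hp x]
    · rintro ⟨s, hc, hp⟩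
      exact ⟨n, le_refl n, s, hc, hp⟩
  refine ⟨hdtc, ?_⟩
  apply eq_of_forall_ge_iff
  intro c
  induction c using ENat.recTopCoe with
  | top => simp
  | coe n => rw [hdtc n, hds n]
end
end
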